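/- Let Σ₁=(X₁,U₁,F₁) and Σ₂=(X₂,U₂,F₂) be systems, and let Q₁ ⊆ X₁ and Q₂ ⊆ X₂ be nonempty sets. Suppose R ⊆ X₁×X₂ is a feedback refinement relation from Σ₁ to Σ₂ and Q₁ = R⁻¹(Q₂). Then h_{1,inv} ≤ h_{2,inv}, where h_{i,inv} denotes the invariance feedback entropy of Σᵢ and Qᵢ. -/

import Mathlib

open Set Filter Topology

/-- An invariant cover `(𝒜, G)` of the system with transition function `F` and the set `Q`:
`cov` is a finite cover of `Q` by subsets of `Q` and `G` assigns to each cover element an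
input such that `F(A, G(A)) ⊆ Q`. -/
structure InvCover {X U : Type*} (F : X → U → Set X) (Q : Set X) where
  cov : Set (Set X)
  G : Set X → U
  finite : cov.Finite
  subset : ∀ A ∈ cov, A ⊆ Q
  covers : Q ⊆ ⋃₀ cov
  inv : ∀ A ∈ cov, ∀ x ∈ A, F x (G A) ⊆ Q

variable {X U : Type*}

/-- The set `P(α|_{[0;t]})` associated with `𝒮 ⊆ 𝒜^{[0;τ)}`: for `t+1 < τ` it is the set of
possible successor cover elements of the initial piece `α|_{[0;t]}`, and for `t = τ-1`
(i.e. `¬ t + 1 < τ`) it is the set `P(α)` of initial cover elements. -/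
def Pset {τ : ℕ} (𝒮 : Set (Fin τ → Set X)) (α : Fin τ → Set X) (t : ℕ) :
    Set (Set X) :=
  if ht : t + 1 < τ then
    {A | ∃ β ∈ 𝒮, (∀ t' : Fin τ, (t' : ℕ) ≤ t → β t' = α t') ∧ A = β ⟨t + 1, ht⟩}
  else
    {A | ∃ β ∈ 𝒮, ∃ h0 : 0 < τ, A = β ⟨0, h0⟩}

/-- `𝒮` is `(τ,Q)`-spanning in the invariant cover `c`. -/
def IsSpanning (F : X → U → Set X) (Q : Set X) (c : InvCover F Q) (τ : ℕ)
    (𝒮 : Set (Fin τ → Set X)) : Prop :=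
  (∀ α ∈ 𝒮, ∀ t, α t ∈ c.cov) ∧
  (∀ x ∈ Q, ∃ α ∈ 𝒮, ∃ h0 : 0 < τ, x ∈ α ⟨0, h0⟩) ∧
  (∀ α ∈ 𝒮, ∀ t : Fin τ, (t : ℕ) + 1 < τ →
    ∀ x ∈ α t, F x (c.G (α t)) ⊆ ⋃ A ∈ Pset 𝒮 α (t : ℕ), A)

/-- The expansion number `N(𝒮)`. -/
noncomputable def expNum {τ : ℕ} (𝒮 : Set (Fin τ → Set X)) : ℕ :=
  sSup {n | ∃ α ∈ 𝒮, n = ∏ t ∈ Finset.range τ, (Pset 𝒮 α t).ncard}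

/-- `r_inv(τ, Q)` : the smallest expansion number of a `(τ,Q)`-spanning set (`⊤` if no
spanning set exists). -/
noncomputable def rinv (F : X → U → Set X) (Q : Set X) (c : InvCover F Q)
    (τ : ℕ) : ℕ∞ :=
  sInf {n | ∃ 𝒮 : Set (Fin τ → Set X), IsSpanning F Q c τ 𝒮 ∧ n = (expNum 𝒮 : ℕ∞)}

/-- Base-2 logarithm `ℕ∞ → EReal`, with `log₂ ∞ = ∞`. -/
noncomputable def elog2 (m : ℕ∞) : EReal :=
  WithTop.recTopCoe ⊤ (fun n : ℕ => ((Real.logb 2 n : ℝ) : EReal)) m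

/-- The entropy `h(𝒜,G)` of an invariant cover, defined through the infimum
`inf_{τ ≥ 1} (1/τ) log₂ r_inv(τ,Q)` (which equals the limit). -/
noncomputable def coverEntropy (F : X → U → Set X) (Q : Set X)
    (c : InvCover F Q) : EReal :=
  ⨅ (τ : ℕ) (_ : 0 < τ), (((τ : ℝ)⁻¹ : ℝ) : EReal) * elog2 (rinv F Q c τ)

/-- The invariance feedback entropy `h_inv` of the system and `Q`. -/
noncomputable def invEntropy (F : X → U → Set X) (Q : Set X) : EReal :=
  ⨅ c : InvCover F Q, coverEntropy F Q c

section FRRConstruction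

namespace FRR

variable {X₁ X₂ : Type*} {τ : ℕ}

def Lpull (R : Set (X₁ × X₂)) (A : Set X₂) : Set X₁ := {x₁ | ∃ x₂ ∈ A, (x₁, x₂) ∈ R}

/-- the set of initial cover elements of `𝒮`. -/
def inits (𝒮 : Set (Fin τ → Set X₂)) : Set (Set X₂) :=
  {A | ∃ β ∈ 𝒮, ∃ h0 : 0 < τ, A = β ⟨0, h0⟩}

lemma Pset_last (𝒮 : Set (Fin τ → Set X₂)) (α : Fin τ → Set X₂) {t : ℕ}
    (ht : ¬ t + 1 < τ) : Pset 𝒮 α t = inits 𝒮 := dif_neg ht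

/-- `β` agrees with `α` on all times `≤ s`. -/
def Matches (α β : Fin τ → Set X₂) (s : ℕ) : Prop :=
  ∀ t' : Fin τ, (t' : ℕ) ≤ s → β t' = α t'

lemma Matches.refl (α : Fin τ → Set X₂) (s : ℕ) : Matches α α s := fun _ _ => rfl

lemma Matches.trans {α β γ : Fin τ → Set X₂} {s s' : ℕ} (hss' : s ≤ s')
    (h1 : Matches α β s') (h2 : Matches β γ s) : Matches α γ s :=
  fun t ht => (h2 t ht).trans (h1 t (ht.trans hss'))

lemma Pset_congr {𝒮 : Set (Fin τ → Set X₂)} {α β : Fin τ → Set X₂} {s t : ℕ}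
    (h : Matches α β s) (hts : t ≤ s) : Pset 𝒮 β t = Pset 𝒮 α t := by
  unfold Pset
  split
  · ext A
    constructor
    · rintro ⟨γ, hγ, hm, rfl⟩
      exact ⟨γ, hγ, fun t' ht' => (hm t' ht').trans (h t' (ht'.trans hts)), rfl⟩
    · rintro ⟨γ, hγ, hm, rfl⟩
      exact ⟨γ, hγ, fun t' ht' => (hm t' ht').trans ((h t' (ht'.trans hts)).symm), rfl⟩
  · rfl

variable (𝒮 : Set (Fin τ → Set X₂))

/-- `M` with explicit fuel. -/
noncomputable def Mfuel : ℕ → ℕ → (Fin τ → Set X₂) → ℕ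
  | 0, _, _ => 1
  | (k+1), s, α =>
    if s + 1 < τ then
      (Pset 𝒮 α s).ncard * sSup {m | ∃ β ∈ 𝒮, Matches α β s ∧ m = Mfuel k (s+1) β}
    else 1

noncomputable def Mnode (α : Fin τ → Set X₂) (s : ℕ) : ℕ := Mfuel 𝒮 (τ - s) s α

/-- the potential of a node. -/
noncomputable def phi (p : (Fin τ → Set X₂) × ℕ) : ℕ :=
  (Mnode 𝒮 p.1 p.2) ^ τ * (expNum 𝒮) ^ p.2

variable {𝒮}

section MLemmas

lemma sup_set_finite (hfin : 𝒮.Finite) (f : (Fin τ → Set X₂) → ℕ) (α : Fin τ → Set X₂) (s : ℕ) :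
    {m | ∃ β ∈ 𝒮, Matches α β s ∧ m = f β}.Finite := by
  have : {m | ∃ β ∈ 𝒮, Matches α β s ∧ m = f β} ⊆ f '' 𝒮 := by
    rintro m ⟨β, hβ, _, rfl⟩; exact ⟨β, hβ, rfl⟩
  exact (hfin.image f).subset this

lemma Mfuel_child_le (hfin : 𝒮.Finite) {α β : Fin τ → Set X₂} {s : ℕ} (hβ : β ∈ 𝒮)
    (hm : Matches α β s) (hs : s + 1 < τ) (k : ℕ) :
    (Pset 𝒮 α s).ncard * Mfuel 𝒮 k (s+1) β ≤ Mfuel 𝒮 (k+1) s α := by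
  rw [Mfuel, if_pos hs]
  refine Nat.mul_le_mul_left _ ?_
  exact le_csSup ((sup_set_finite hfin _ α s).bddAbove) ⟨β, hβ, hm, rfl⟩

lemma one_le_Mfuel (hfin : 𝒮.Finite) (hPne : ∀ β ∈ 𝒮, ∀ s : ℕ, (Pset 𝒮 β s).Nonempty ∧ (Pset 𝒮 β s).Finite) :
    ∀ (k : ℕ) (s : ℕ) (α : Fin τ → Set X₂), α ∈ 𝒮 → 1 ≤ Mfuel 𝒮 k s α := by
  intro k
  induction k with
  | zero => intro s α _; simp [Mfuel]
  | succ k ih =>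
    intro s α hα
    rw [Mfuel]
    split
    · have h1 : 1 ≤ (Pset 𝒮 α s).ncard := by
        obtain ⟨hne, hfin'⟩ := hPne α hα s
        exact Nat.one_le_iff_ne_zero.mpr (by simpa [Set.ncard_eq_zero hfin'] using hne.ne_empty)
      have h2 : 1 ≤ sSup {m | ∃ β ∈ 𝒮, Matches α β s ∧ m = Mfuel 𝒮 k (s+1) β} := by
        refine le_trans (ih (s+1) α hα) ?_
        exact le_csSup ((sup_set_finite hfin _ α s).bddAbove) ⟨α, hα, Matches.refl α s, rfl⟩
      calc 1 = 1 * 1 := by ring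
      _ ≤ _ := Nat.mul_le_mul h1 h2
    · exact le_refl 1

end MLemmas

end FRR

section Chunk2
namespace FRR

variable {X₁ X₂ : Type*} {τ : ℕ} {𝒮 : Set (Fin τ → Set X₂)}

lemma Pset_subset {K : Set (Set X₂)} (hval : ∀ β ∈ 𝒮, ∀ t, β t ∈ K)
    (α : Fin τ → Set X₂) (t : ℕ) : Pset 𝒮 α t ⊆ K := by
  unfold Pset
  split
  · rintro A ⟨β, hβ, _, rfl⟩; exact hval β hβ _
  · rintro A ⟨β, hβ, _, rfl⟩; exact hval β hβ _

lemma Pset_finite {K : Set (Set X₂)} (hK : K.Finite)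
    (hval : ∀ β ∈ 𝒮, ∀ t, β t ∈ K) (α : Fin τ → Set X₂) (t : ℕ) :
    (Pset 𝒮 α t).Finite := hK.subset (Pset_subset hval α t)

lemma Pset_nonempty {α : Fin τ → Set X₂} (hα : α ∈ 𝒮) (h0 : 0 < τ) (t : ℕ) :
    (Pset 𝒮 α t).Nonempty := by
  unfold Pset
  split
  · exact ⟨_, α, hα, Matches.refl α t, rfl⟩
  · exact ⟨_, α, hα, h0, rfl⟩

lemma one_le_Psetncard {K : Set (Set X₂)} (hK : K.Finite)
    (hval : ∀ β ∈ 𝒮, ∀ t, β t ∈ K) {α : Fin τ → Set X₂} (hα : α ∈ 𝒮) (h0 : 0 < τ)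
    (t : ℕ) : 1 ≤ (Pset 𝒮 α t).ncard :=
  Nat.one_le_iff_ne_zero.mpr (by
    simpa [Set.ncard_eq_zero (Pset_finite hK hval α t)] using
      (Pset_nonempty hα h0 t).ne_empty)

lemma Psetncard_le {K : Set (Set X₂)} (hK : K.Finite)
    (hval : ∀ β ∈ 𝒮, ∀ t, β t ∈ K) (α : Fin τ → Set X₂) (t : ℕ) :
    (Pset 𝒮 α t).ncard ≤ K.ncard :=
  Set.ncard_le_ncard (Pset_subset hval α t) hK

lemma expNum_bddAbove {K : Set (Set X₂)} (hK : K.Finite)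
    (hval : ∀ β ∈ 𝒮, ∀ t, β t ∈ K) :
    BddAbove {n | ∃ α ∈ 𝒮, n = ∏ t ∈ Finset.range τ, (Pset 𝒮 α t).ncard} := by
  refine ⟨K.ncard ^ τ, ?_⟩
  rintro n ⟨α, hα, rfl⟩
  calc ∏ t ∈ Finset.range τ, (Pset 𝒮 α t).ncard
      ≤ ∏ _t ∈ Finset.range τ, K.ncard :=
        Finset.prod_le_prod' (fun i _ => Psetncard_le hK hval α i)
    _ = K.ncard ^ τ := by simp

lemma prod_le_expNum {K : Set (Set X₂)} (hK : K.Finite)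
    (hval : ∀ β ∈ 𝒮, ∀ t, β t ∈ K) {α : Fin τ → Set X₂} (hα : α ∈ 𝒮) :
    ∏ t ∈ Finset.range τ, (Pset 𝒮 α t).ncard ≤ expNum 𝒮 :=
  le_csSup (expNum_bddAbove hK hval) ⟨α, hα, rfl⟩

lemma one_le_expNum {K : Set (Set X₂)} (hK : K.Finite)
    (hval : ∀ β ∈ 𝒮, ∀ t, β t ∈ K) {α : Fin τ → Set X₂} (hα : α ∈ 𝒮) (h0 : 0 < τ) :
    1 ≤ expNum 𝒮 := by
  refine le_trans ?_ (prod_le_expNum hK hval hα)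
  exact Finset.one_le_prod' (fun i _ => one_le_Psetncard hK hval hα h0 i)

lemma Mnode_child_le (hfin : 𝒮.Finite) {α β : Fin τ → Set X₂} {s : ℕ} (hβ : β ∈ 𝒮)
    (hm : Matches α β s) (hs : s + 1 < τ) :
    (Pset 𝒮 α s).ncard * Mnode 𝒮 β (s+1) ≤ Mnode 𝒮 α s := by
  have h1 : τ - s = (τ - (s+1)) + 1 := by omega
  rw [Mnode, Mnode, h1]
  exact Mfuel_child_le hfin hβ hm hs _

lemma one_le_Mnode (hfin : 𝒮.Finite) {K : Set (Set X₂)} (hK : K.Finite)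
    (hval : ∀ β ∈ 𝒮, ∀ t, β t ∈ K) {α : Fin τ → Set X₂} (hα : α ∈ 𝒮) (h0 : 0 < τ)
    (s : ℕ) : 1 ≤ Mnode 𝒮 α s :=
  one_le_Mfuel hfin
    (fun β hβ t => ⟨Pset_nonempty hβ h0 t, Pset_finite hK hval β t⟩) _ s α hα

/-- key counting lemma: `M(α,s) · #inits ≤ max` over matching `β` of the suffix product. -/
lemma Mnode_mul_inits_le (hfin : 𝒮.Finite) {K : Set (Set X₂)} (hK : K.Finite)
    (hval : ∀ β ∈ 𝒮, ∀ t, β t ∈ K) :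
    ∀ (k s : ℕ), τ - s = k → s < τ → ∀ α ∈ 𝒮,
      Mnode 𝒮 α s * (inits 𝒮).ncard ≤
        sSup {n | ∃ β ∈ 𝒮, Matches α β s ∧
          n = ∏ t ∈ Finset.Ico s τ, (Pset 𝒮 β t).ncard} := by
  intro k
  induction k with
  | zero => intro s h1 h2; omega
  | succ k ih =>
    intro s hk hs α hα
    have hbdd : BddAbove {n | ∃ β ∈ 𝒮, Matches α β s ∧
        n = ∏ t ∈ Finset.Ico s τ, (Pset 𝒮 β t).ncard} :=
      (sup_set_finite hfin _ α s).bddAbove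
    by_cases hs1 : s + 1 < τ
    · -- regular case
      have hMn : Mnode 𝒮 α s =
          (Pset 𝒮 α s).ncard *
            sSup {m | ∃ β ∈ 𝒮, Matches α β s ∧ m = Mfuel 𝒮 k (s+1) β} := by
        have h1 : τ - s = k + 1 := hk
        rw [Mnode, h1, Mfuel, if_pos hs1]
      -- the inner sup is attained
      have hne : {m | ∃ β ∈ 𝒮, Matches α β s ∧ m = Mfuel 𝒮 k (s+1) β}.Nonempty :=
        ⟨_, α, hα, Matches.refl α s, rfl⟩
      obtain ⟨β₀, hβ₀, hmβ₀, hv⟩ :=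
        Nat.sSup_mem hne (sup_set_finite hfin _ α s).bddAbove
      have hMfuel : Mfuel 𝒮 k (s+1) β₀ = Mnode 𝒮 β₀ (s+1) := by
        rw [Mnode]; congr 1; omega
      -- apply IH at s+1 with β₀
      have hIH := ih (s+1) (by omega) hs1 β₀ hβ₀
      have hne2 : {n | ∃ γ ∈ 𝒮, Matches β₀ γ (s+1) ∧
          n = ∏ t ∈ Finset.Ico (s+1) τ, (Pset 𝒮 γ t).ncard}.Nonempty :=
        ⟨_, β₀, hβ₀, Matches.refl β₀ (s+1), rfl⟩
      obtain ⟨γ₀, hγ₀, hmγ₀, hv2⟩ :=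
        Nat.sSup_mem hne2 (sup_set_finite hfin _ β₀ (s+1)).bddAbove
      have hmαγ : Matches α γ₀ s :=
        fun t ht => (hmγ₀ t (ht.trans (Nat.le_succ s))).trans (hmβ₀ t ht)
      calc Mnode 𝒮 α s * (inits 𝒮).ncard
          = (Pset 𝒮 α s).ncard * (Mnode 𝒮 β₀ (s+1) * (inits 𝒮).ncard) := by
            rw [hMn, hv, hMfuel]; ring
        _ ≤ (Pset 𝒮 α s).ncard *
              sSup {n | ∃ γ ∈ 𝒮, Matches β₀ γ (s+1) ∧
                n = ∏ t ∈ Finset.Ico (s+1) τ, (Pset 𝒮 γ t).ncard} :=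
            Nat.mul_le_mul_left _ hIH
        _ = (Pset 𝒮 α s).ncard * ∏ t ∈ Finset.Ico (s+1) τ, (Pset 𝒮 γ₀ t).ncard := by
            rw [← hv2]
        _ = (Pset 𝒮 γ₀ s).ncard * ∏ t ∈ Finset.Ico (s+1) τ, (Pset 𝒮 γ₀ t).ncard := by
            rw [Pset_congr hmαγ (le_refl s)]
        _ = ∏ t ∈ Finset.Ico s τ, (Pset 𝒮 γ₀ t).ncard := by
            rw [Finset.prod_eq_prod_Ico_succ_bot hs]
        _ ≤ _ := le_csSup hbdd ⟨γ₀, hγ₀, hmαγ, rfl⟩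
    · -- bottom case : s = τ - 1
      have hMn : Mnode 𝒮 α s = 1 := by
        have h1 : τ - s = k + 1 := hk
        rw [Mnode, h1, Mfuel, if_neg hs1]
      have hIco : Finset.Ico s τ = {s} := by
        have : τ = s + 1 := by omega
        rw [this]; exact Nat.Ico_succ_singleton s
      have hmem : (inits 𝒮).ncard ∈ {n | ∃ β ∈ 𝒮, Matches α β s ∧
          n = ∏ t ∈ Finset.Ico s τ, (Pset 𝒮 β t).ncard} := by
        refine ⟨α, hα, Matches.refl α s, ?_⟩
        rw [hIco, Finset.prod_singleton, Pset_last 𝒮 α hs1]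
      rw [hMn, one_mul]
      exact le_csSup hbdd hmem

end FRR
end Chunk2

section Chunk3
namespace FRR

variable {X₁ X₂ : Type*} {τ : ℕ}

attribute [local instance] Classical.propDecidable

def IsNode (R : Set (X₁ × X₂)) (𝒮 : Set (Fin τ → Set X₂)) (C : Set X₁)
    (p : (Fin τ → Set X₂) × ℕ) : Prop :=
  p.1 ∈ 𝒮 ∧ ∃ hs : p.2 < τ, C = Lpull R (p.1 ⟨p.2, hs⟩)

def HasCls (R : Set (X₁ × X₂)) (𝒮 : Set (Fin τ → Set X₂)) (C : Set X₁) : Prop :=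
  ∃ p, IsNode R 𝒮 C p

lemma exists_min_node {R : Set (X₁ × X₂)} {𝒮 : Set (Fin τ → Set X₂)} {C : Set X₁}
    (h : HasCls R 𝒮 C) :
    ∃ p, IsNode R 𝒮 C p ∧ ∀ q, IsNode R 𝒮 C q → phi 𝒮 p ≤ phi 𝒮 q := by
  classical
  have hne : {n | ∃ p, IsNode R 𝒮 C p ∧ n = phi 𝒮 p}.Nonempty :=
    ⟨phi 𝒮 h.choose, h.choose, h.choose_spec, rfl⟩
  obtain ⟨p, hp, hval⟩ := Nat.sInf_mem hne
  exact ⟨p, hp, fun q hq => by rw [← hval]; exact Nat.sInf_le ⟨q, hq, rfl⟩⟩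

noncomputable def sigma (R : Set (X₁ × X₂)) (𝒮 : Set (Fin τ → Set X₂)) (h0 : 0 < τ)
    (C : Set X₁) : (Fin τ → Set X₂) × ℕ :=
  if h : HasCls R 𝒮 C then (exists_min_node h).choose else (fun _ => ∅, 0)

lemma sigma_lt (R : Set (X₁ × X₂)) (𝒮 : Set (Fin τ → Set X₂)) (h0 : 0 < τ)
    (C : Set X₁) : (sigma R 𝒮 h0 C).2 < τ := by
  unfold sigma
  split
  · next h => obtain ⟨⟨_, hs, _⟩, _⟩ := (exists_min_node h).choose_spec; exact hs
  · exact h0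

lemma sigma_isNode {R : Set (X₁ × X₂)} {𝒮 : Set (Fin τ → Set X₂)} {h0 : 0 < τ}
    {C : Set X₁} (h : HasCls R 𝒮 C) : IsNode R 𝒮 C (sigma R 𝒮 h0 C) := by
  unfold sigma
  rw [dif_pos h]
  exact (exists_min_node h).choose_spec.1

lemma sigma_min {R : Set (X₁ × X₂)} {𝒮 : Set (Fin τ → Set X₂)} {h0 : 0 < τ}
    {C : Set X₁} (h : HasCls R 𝒮 C) :
    ∀ q, IsNode R 𝒮 C q → phi 𝒮 (sigma R 𝒮 h0 C) ≤ phi 𝒮 q := by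
  unfold sigma
  rw [dif_pos h]
  exact (exists_min_node h).choose_spec.2

noncomputable def elt (R : Set (X₁ × X₂)) (𝒮 : Set (Fin τ → Set X₂)) (h0 : 0 < τ)
    (C : Set X₁) : Set X₂ :=
  (sigma R 𝒮 h0 C).1 ⟨(sigma R 𝒮 h0 C).2, sigma_lt R 𝒮 h0 C⟩

lemma sigma_fst_mem {R : Set (X₁ × X₂)} {𝒮 : Set (Fin τ → Set X₂)} {h0 : 0 < τ}
    {C : Set X₁} (h : HasCls R 𝒮 C) : (sigma R 𝒮 h0 C).1 ∈ 𝒮 :=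
  (sigma_isNode (h0 := h0) h).1

lemma Lpull_elt {R : Set (X₁ × X₂)} {𝒮 : Set (Fin τ → Set X₂)} {h0 : 0 < τ}
    {C : Set X₁} (h : HasCls R 𝒮 C) : Lpull R (elt R 𝒮 h0 C) = C := by
  obtain ⟨_, hs, hC⟩ := sigma_isNode (h0 := h0) h
  rw [elt, ← hC]

noncomputable def NextF (R : Set (X₁ × X₂)) (𝒮 : Set (Fin τ → Set X₂)) (h0 : 0 < τ)
    (C : Set X₁) : Set (Set X₁) :=
  if (sigma R 𝒮 h0 C).2 + 1 < τ then
    Lpull R '' Pset 𝒮 (sigma R 𝒮 h0 C).1 (sigma R 𝒮 h0 C).2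
  else Lpull R '' inits 𝒮

def cov1 (R : Set (X₁ × X₂)) (𝒮 : Set (Fin τ → Set X₂)) : Set (Set X₁) :=
  {C | HasCls R 𝒮 C}

variable {R : Set (X₁ × X₂)} {𝒮 : Set (Fin τ → Set X₂)} {h0 : 0 < τ}

lemma inits_hasCls {A : Set X₂} (hA : A ∈ inits 𝒮) : HasCls R 𝒮 (Lpull R A) := by
  obtain ⟨β, hβ, h0', rfl⟩ := hA
  exact ⟨(β, 0), hβ, h0', rfl⟩

lemma NextF_subset_cov1 (C : Set X₁) : NextF R 𝒮 h0 C ⊆ cov1 R 𝒮 := by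
  unfold NextF
  split
  · next hlt =>
    rintro D ⟨A, hA, rfl⟩
    rw [Pset, dif_pos hlt] at hA
    obtain ⟨β, hβ, _, rfl⟩ := hA
    exact ⟨(β, (sigma R 𝒮 h0 C).2 + 1), hβ, hlt, rfl⟩
  · rintro D ⟨A, hA, rfl⟩
    exact inits_hasCls hA

lemma NextF_nonempty {C : Set X₁} (hC : HasCls R 𝒮 C) :
    (NextF R 𝒮 h0 C).Nonempty := by
  unfold NextF
  split
  · exact ((Pset_nonempty (sigma_fst_mem (h0 := h0) hC) h0 _).image _)
  · obtain ⟨p, hp, hs, _⟩ := hC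
    exact ⟨_, _, ⟨p.1, hp, h0, rfl⟩, rfl⟩

noncomputable def ext (R : Set (X₁ × X₂)) (𝒮 : Set (Fin τ → Set X₂)) (h0 : 0 < τ)
    (C : Set X₁) : Set X₁ :=
  if h : (NextF R 𝒮 h0 C).Nonempty then h.some else C

lemma ext_mem {C : Set X₁} (hC : HasCls R 𝒮 C) :
    ext R 𝒮 h0 C ∈ NextF R 𝒮 h0 C := by
  rw [ext, dif_pos (NextF_nonempty hC)]
  exact (NextF_nonempty hC).some_mem

lemma ext_hasCls {C : Set X₁} (hC : HasCls R 𝒮 C) :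
    HasCls R 𝒮 (ext R 𝒮 h0 C) :=
  NextF_subset_cov1 C (ext_mem hC)

noncomputable def followF (R : Set (X₁ × X₂)) (𝒮 : Set (Fin τ → Set X₂)) (h0 : 0 < τ)
    (C : Set X₁) : ℕ → Set X₁
  | 0 => C
  | (n+1) => ext R 𝒮 h0 (followF R 𝒮 h0 C n)

lemma followF_hasCls {C : Set X₁} (hC : HasCls R 𝒮 C) (n : ℕ) :
    HasCls R 𝒮 (followF R 𝒮 h0 C n) := by
  induction n with
  | zero => exact hC
  | succ n ih => exact ext_hasCls ih

lemma followF_mem {C : Set X₁} (hC : HasCls R 𝒮 C) (n : ℕ) :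
    followF R 𝒮 h0 C (n+1) ∈ NextF R 𝒮 h0 (followF R 𝒮 h0 C n) :=
  ext_mem (followF_hasCls hC n)

def S1 (R : Set (X₁ × X₂)) (𝒮 : Set (Fin τ → Set X₂)) (h0 : 0 < τ) (τ₁ : ℕ) :
    Set (Fin τ₁ → Set X₁) :=
  {β | (∀ h0' : 0 < τ₁, β ⟨0, h0'⟩ ∈ Lpull R '' inits 𝒮) ∧
       ∀ (t : ℕ) (h : t + 1 < τ₁), β ⟨t+1, h⟩ ∈ NextF R 𝒮 h0 (β ⟨t, Nat.lt_of_succ_lt h⟩)}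

lemma S1_hasCls {τ₁ : ℕ} {β : Fin τ₁ → Set X₁} (hβ : β ∈ S1 R 𝒮 h0 τ₁) :
    ∀ n (hn : n < τ₁), HasCls R 𝒮 (β ⟨n, hn⟩) := by
  intro n
  induction n with
  | zero =>
    intro hn
    obtain ⟨A, hA, hEq⟩ := hβ.1 hn
    rw [← hEq]
    exact inits_hasCls hA
  | succ n ih =>
    intro hn
    exact NextF_subset_cov1 _ (hβ.2 n hn)

end FRR
end Chunk3

section Chunk4
namespace FRR

variable {X₁ X₂ : Type*} {τ : ℕ}
variable {R : Set (X₁ × X₂)} {𝒮 : Set (Fin τ → Set X₂)} {h0 : 0 < τ}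

lemma Pset_S1_subset {τ₁ : ℕ} {β : Fin τ₁ → Set X₁} {t : ℕ} (ht : t + 1 < τ₁) :
    Pset (S1 R 𝒮 h0 τ₁) β t ⊆ NextF R 𝒮 h0 (β ⟨t, Nat.lt_of_succ_lt ht⟩) := by
  intro A hA
  rw [Pset, dif_pos ht] at hA
  obtain ⟨γ, hγ, hm, rfl⟩ := hA
  have hEq : γ ⟨t, Nat.lt_of_succ_lt ht⟩ = β ⟨t, Nat.lt_of_succ_lt ht⟩ :=
    hm ⟨t, Nat.lt_of_succ_lt ht⟩ (le_refl t)
  have := hγ.2 t ht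
  rwa [hEq] at this

lemma Pset_S1_last {τ₁ : ℕ} {β : Fin τ₁ → Set X₁} {t : ℕ} (ht : ¬ t + 1 < τ₁) :
    Pset (S1 R 𝒮 h0 τ₁) β t ⊆ Lpull R '' inits 𝒮 := by
  intro A hA
  rw [Pset, dif_neg ht] at hA
  obtain ⟨γ, hγ, h0', rfl⟩ := hA
  exact hγ.1 h0'

lemma NextF_subset_Pset_S1 {τ₁ : ℕ} {β : Fin τ₁ → Set X₁} {t : ℕ}
    (hβ : β ∈ S1 R 𝒮 h0 τ₁) (ht : t + 1 < τ₁) :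
    NextF R 𝒮 h0 (β ⟨t, Nat.lt_of_succ_lt ht⟩) ⊆ Pset (S1 R 𝒮 h0 τ₁) β t := by
  intro D hD
  classical
  have hDcls : HasCls R 𝒮 D := NextF_subset_cov1 _ hD
  set γ : Fin τ₁ → Set X₁ :=
    fun u => if hu : (u : ℕ) ≤ t then β u else followF R 𝒮 h0 D ((u : ℕ) - (t+1))
    with hγdef
  have hγt : ∀ (n : ℕ) (hn : n < τ₁), n ≤ t → γ ⟨n, hn⟩ = β ⟨n, hn⟩ := by
    intro n hn hle; simp only [hγdef]; rw [dif_pos hle]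
  have hγafter : ∀ (n : ℕ) (hn : n < τ₁), t < n →
      γ ⟨n, hn⟩ = followF R 𝒮 h0 D (n - (t+1)) := by
    intro n hn hgt; simp only [hγdef]; rw [dif_neg (by omega)]
  have hγS1 : γ ∈ S1 R 𝒮 h0 τ₁ := by
    constructor
    · intro h0'
      rw [hγt 0 h0' (Nat.zero_le t)]
      exact hβ.1 h0'
    · intro j hj
      rcases lt_trichotomy j t with hlt | rfl | hgt
      · rw [hγt (j+1) hj (by omega), hγt j (Nat.lt_of_succ_lt hj) (by omega)]
        exact hβ.2 j hj
      · rw [hγt j (Nat.lt_of_succ_lt hj) (le_refl j),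
          hγafter (j+1) hj (by omega)]
        simpa [followF] using hD
      · rw [hγafter j (Nat.lt_of_succ_lt hj) hgt, hγafter (j+1) hj (by omega)]
        have hstep : (j+1) - (t+1) = (j - (t+1)) + 1 := by omega
        rw [hstep]
        exact followF_mem hDcls _
  rw [Pset, dif_pos ht]
  refine ⟨γ, hγS1, ?_, ?_⟩
  · intro t' ht'
    exact hγt t' t'.isLt ht'
  · rw [hγafter (t+1) ht (by omega)]
    simp only [Nat.sub_self]
    rfl

end FRR
end Chunk4

section Chunk5
namespace FRR

variable {X₁ X₂ : Type*} {τ : ℕ}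
variable {R : Set (X₁ × X₂)} {𝒮 : Set (Fin τ → Set X₂)} {h0 : 0 < τ}
variable {K : Set (Set X₂)}

lemma inits_subset_K (hval : ∀ β ∈ 𝒮, ∀ t, β t ∈ K) : inits 𝒮 ⊆ K := by
  rintro A ⟨β, hβ, h0', rfl⟩; exact hval β hβ _

lemma NextF_finite (hK : K.Finite) (hval : ∀ β ∈ 𝒮, ∀ t, β t ∈ K) (C : Set X₁) :
    (NextF R 𝒮 h0 C).Finite := by
  unfold NextF
  split
  · exact ((Pset_finite hK hval _ _).image _)
  · exact ((hK.subset (inits_subset_K hval)).image _)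

include h0 in
lemma one_le_inits_ncard (hK : K.Finite) (hval : ∀ β ∈ 𝒮, ∀ t, β t ∈ K)
    (hSne : 𝒮.Nonempty) : 1 ≤ (inits 𝒮).ncard := by
  obtain ⟨α, hα⟩ := hSne
  have hne : (inits 𝒮).Nonempty := ⟨_, α, hα, h0, rfl⟩
  have hfin : (inits 𝒮).Finite := hK.subset (inits_subset_K hval)
  exact Nat.one_le_iff_ne_zero.mpr (by simpa [Set.ncard_eq_zero hfin] using hne.ne_empty)

include h0 in
lemma inits_ncard_le_expNum (hK : K.Finite) (hval : ∀ β ∈ 𝒮, ∀ t, β t ∈ K)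
    (hSne : 𝒮.Nonempty) : (inits 𝒮).ncard ≤ expNum 𝒮 := by
  obtain ⟨α, hα⟩ := hSne
  have h1 : inits 𝒮 = Pset 𝒮 α (τ - 1) := (Pset_last 𝒮 α (by omega)).symm
  have h2 : (Pset 𝒮 α (τ-1)).ncard ≤ ∏ t ∈ Finset.range τ, (Pset 𝒮 α t).ncard :=
    Finset.single_le_prod' (fun i _ => one_le_Psetncard hK hval hα h0 i)
      (Finset.mem_range.mpr (by omega))
  rw [h1]
  exact h2.trans (prod_le_expNum hK hval hα)

include h0 in
lemma Mnode_zero_mul_le_expNum (hfin : 𝒮.Finite) (hK : K.Finite)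
    (hval : ∀ β ∈ 𝒮, ∀ t, β t ∈ K) {α : Fin τ → Set X₂} (hα : α ∈ 𝒮) :
    Mnode 𝒮 α 0 * (inits 𝒮).ncard ≤ expNum 𝒮 := by
  refine le_trans (Mnode_mul_inits_le hfin hK hval τ 0 (by omega) h0 α hα) ?_
  refine csSup_le ⟨_, α, hα, Matches.refl α 0, rfl⟩ ?_
  rintro n ⟨γ, hγ, _, rfl⟩
  rw [← Finset.range_eq_Ico]
  exact prod_le_expNum hK hval hγ

lemma phi_sigma_le_of_isNode {C : Set X₁} {q : (Fin τ → Set X₂) × ℕ}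
    (hq : IsNode R 𝒮 C q) : phi 𝒮 (sigma R 𝒮 h0 C) ≤ phi 𝒮 q :=
  sigma_min ⟨q, hq⟩ q hq

/-- initial potential bound -/
lemma phi_init_le (hfin : 𝒮.Finite) (hK : K.Finite)
    (hval : ∀ β ∈ 𝒮, ∀ t, β t ∈ K) {C : Set X₁} (hC : C ∈ Lpull R '' inits 𝒮) :
    phi 𝒮 (sigma R 𝒮 h0 C) ≤ (expNum 𝒮) ^ τ := by
  obtain ⟨A, ⟨α, hα, h0', rfl⟩, rfl⟩ := hC
  have h1 : phi 𝒮 (sigma R 𝒮 h0 (Lpull R (α ⟨0, h0'⟩))) ≤ phi 𝒮 (α, 0) :=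
    phi_sigma_le_of_isNode ⟨hα, h0', rfl⟩
  refine h1.trans ?_
  have h2 : phi 𝒮 (α, 0) = (Mnode 𝒮 α 0) ^ τ := by simp [phi]
  rw [h2]
  refine Nat.pow_le_pow_left ?_ τ
  calc Mnode 𝒮 α 0 ≤ Mnode 𝒮 α 0 * (inits 𝒮).ncard :=
        Nat.le_mul_of_pos_right _ (one_le_inits_ncard (h0 := h0) hK hval ⟨α, hα⟩)
    _ ≤ expNum 𝒮 := Mnode_zero_mul_le_expNum (h0 := h0) hfin hK hval hα

lemma one_le_phi (hfin : 𝒮.Finite) (hK : K.Finite)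
    (hval : ∀ β ∈ 𝒮, ∀ t, β t ∈ K) (hSne : 𝒮.Nonempty) {C : Set X₁}
    (hC : HasCls R 𝒮 C) : 1 ≤ phi 𝒮 (sigma R 𝒮 h0 C) := by
  have h1 : 1 ≤ Mnode 𝒮 (sigma R 𝒮 h0 C).1 (sigma R 𝒮 h0 C).2 :=
    one_le_Mnode hfin hK hval (sigma_fst_mem (h0 := h0) hC) h0 _
  have h2 : 1 ≤ expNum 𝒮 := by
    obtain ⟨α, hα⟩ := hSne
    exact one_le_expNum hK hval hα h0
  rw [phi]
  calc 1 = 1 * 1 := by ring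
  _ ≤ _ := Nat.mul_le_mul (Nat.one_le_pow _ _ h1) (Nat.one_le_pow _ _ h2)

/-- the key per-step potential inequality. -/
lemma step_bound (hfin : 𝒮.Finite) (hK : K.Finite)
    (hval : ∀ β ∈ 𝒮, ∀ t, β t ∈ K) {τ₁ : ℕ} {β : Fin τ₁ → Set X₁}
    (hβ : β ∈ S1 R 𝒮 h0 τ₁) {j : ℕ} (hj : j + 1 < τ₁) :
    (Pset (S1 R 𝒮 h0 τ₁) β j).ncard ^ τ *
      phi 𝒮 (sigma R 𝒮 h0 (β ⟨j+1, hj⟩)) ≤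
    phi 𝒮 (sigma R 𝒮 h0 (β ⟨j, Nat.lt_of_succ_lt hj⟩)) * expNum 𝒮 := by
  set C := β ⟨j, Nat.lt_of_succ_lt hj⟩ with hCdef
  set p := sigma R 𝒮 h0 C with hpdef
  have hCcls : HasCls R 𝒮 C := S1_hasCls hβ j (Nat.lt_of_succ_lt hj)
  have hp1 : p.1 ∈ 𝒮 := sigma_fst_mem (h0 := h0) hCcls
  have hC' : β ⟨j+1, hj⟩ ∈ NextF R 𝒮 h0 C := hβ.2 j hj
  have hksub : Pset (S1 R 𝒮 h0 τ₁) β j ⊆ NextF R 𝒮 h0 C := Pset_S1_subset hj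
  have hkle : (Pset (S1 R 𝒮 h0 τ₁) β j).ncard ≤ (NextF R 𝒮 h0 C).ncard :=
    Set.ncard_le_ncard hksub (NextF_finite hK hval C)
  by_cases hreg : p.2 + 1 < τ
  · -- regular step
    have hNeq : NextF R 𝒮 h0 C = Lpull R '' Pset 𝒮 p.1 p.2 := if_pos hreg
    have hkle2 : (Pset (S1 R 𝒮 h0 τ₁) β j).ncard ≤ (Pset 𝒮 p.1 p.2).ncard := by
      refine hkle.trans ?_
      rw [hNeq]
      exact le_trans (Set.ncard_image_le (Pset_finite hK hval _ _)) (le_refl _)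
    rw [hNeq] at hC'
    obtain ⟨A, hA, hC'eq⟩ := hC'
    rw [Pset, dif_pos hreg] at hA
    obtain ⟨ah, hah, hm, rfl⟩ := hA
    have hnode : IsNode R 𝒮 (β ⟨j+1, hj⟩) (ah, p.2 + 1) := ⟨hah, hreg, hC'eq.symm⟩
    have hφle : phi 𝒮 (sigma R 𝒮 h0 (β ⟨j+1, hj⟩)) ≤
        (Mnode 𝒮 ah (p.2+1)) ^ τ * (expNum 𝒮) ^ (p.2+1) :=
      phi_sigma_le_of_isNode hnode
    have hM : (Pset 𝒮 p.1 p.2).ncard * Mnode 𝒮 ah (p.2+1) ≤ Mnode 𝒮 p.1 p.2 :=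
      Mnode_child_le hfin hah hm hreg
    calc (Pset (S1 R 𝒮 h0 τ₁) β j).ncard ^ τ * phi 𝒮 (sigma R 𝒮 h0 (β ⟨j+1, hj⟩))
        ≤ (Pset 𝒮 p.1 p.2).ncard ^ τ *
            ((Mnode 𝒮 ah (p.2+1)) ^ τ * (expNum 𝒮) ^ (p.2+1)) :=
          Nat.mul_le_mul (Nat.pow_le_pow_left hkle2 τ) hφle
      _ = ((Pset 𝒮 p.1 p.2).ncard * Mnode 𝒮 ah (p.2+1)) ^ τ *
            ((expNum 𝒮) ^ p.2 * expNum 𝒮) := by ring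
      _ ≤ (Mnode 𝒮 p.1 p.2) ^ τ * ((expNum 𝒮) ^ p.2 * expNum 𝒮) :=
          Nat.mul_le_mul_right _ (Nat.pow_le_pow_left hM τ)
      _ = phi 𝒮 p * expNum 𝒮 := by rw [phi]; ring
  · -- bottom step
    have hNeq : NextF R 𝒮 h0 C = Lpull R '' inits 𝒮 := if_neg hreg
    have hIfin : (inits 𝒮).Finite := hK.subset (inits_subset_K hval)
    have hkle2 : (Pset (S1 R 𝒮 h0 τ₁) β j).ncard ≤ (inits 𝒮).ncard := by
      refine hkle.trans ?_
      rw [hNeq]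
      exact Set.ncard_image_le hIfin
    rw [hNeq] at hC'
    obtain ⟨A, hA, hC'eq⟩ := hC'
    obtain ⟨α', hα', h0', hAeq⟩ := hA
    have hnode : IsNode R 𝒮 (β ⟨j+1, hj⟩) (α', 0) := ⟨hα', h0', by rw [← hC'eq, hAeq]⟩
    have hφle : phi 𝒮 (sigma R 𝒮 h0 (β ⟨j+1, hj⟩)) ≤ (Mnode 𝒮 α' 0) ^ τ := by
      refine (phi_sigma_le_of_isNode hnode).trans ?_
      simp [phi]
    have hbot : p.2 + 1 = τ := by
      have hlt := sigma_lt R 𝒮 h0 C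
      rw [← hpdef] at hlt
      omega
    have h1M : 1 ≤ Mnode 𝒮 p.1 p.2 := one_le_Mnode hfin hK hval hp1 h0 _
    calc (Pset (S1 R 𝒮 h0 τ₁) β j).ncard ^ τ * phi 𝒮 (sigma R 𝒮 h0 (β ⟨j+1, hj⟩))
        ≤ (inits 𝒮).ncard ^ τ * (Mnode 𝒮 α' 0) ^ τ :=
          Nat.mul_le_mul (Nat.pow_le_pow_left hkle2 τ) hφle
      _ = (Mnode 𝒮 α' 0 * (inits 𝒮).ncard) ^ τ := by ring
      _ ≤ (expNum 𝒮) ^ τ :=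
          Nat.pow_le_pow_left (Mnode_zero_mul_le_expNum (h0 := h0) hfin hK hval hα') τ
      _ = (expNum 𝒮) ^ (p.2 + 1) := by rw [hbot]
      _ ≤ (Mnode 𝒮 p.1 p.2) ^ τ * ((expNum 𝒮) ^ p.2 * expNum 𝒮) := by
          rw [pow_succ]
          exact Nat.le_mul_of_pos_left _ (pow_pos h1M τ)
      _ = phi 𝒮 p * expNum 𝒮 := by rw [phi]; ring

end FRR
end Chunk5

section Chunk6
namespace FRR

variable {X₁ X₂ : Type*} {τ : ℕ}
variable {R : Set (X₁ × X₂)} {𝒮 : Set (Fin τ → Set X₂)} {h0 : 0 < τ}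
variable {K : Set (Set X₂)}

include h0 in
lemma S1_nonempty (hSne : 𝒮.Nonempty) (τ₁ : ℕ) : (S1 R 𝒮 h0 τ₁).Nonempty := by
  obtain ⟨α, hα⟩ := hSne
  set C₀ : Set X₁ := Lpull R (α ⟨0, h0⟩) with hC₀
  have hC₀i : C₀ ∈ Lpull R '' inits 𝒮 := ⟨_, ⟨α, hα, h0, rfl⟩, rfl⟩
  have hC₀cls : HasCls R 𝒮 C₀ := ⟨(α, 0), hα, h0, rfl⟩
  refine ⟨fun u => followF R 𝒮 h0 C₀ (u : ℕ), ?_, ?_⟩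
  · intro h0'
    exact hC₀i
  · intro t h
    exact followF_mem hC₀cls t

lemma telescope (hfin : 𝒮.Finite) (hK : K.Finite)
    (hval : ∀ β ∈ 𝒮, ∀ t, β t ∈ K) {τ₁ : ℕ} {β : Fin τ₁ → Set X₁}
    (hβ : β ∈ S1 R 𝒮 h0 τ₁) :
    ∀ j (hj : j < τ₁),
      (∏ t ∈ Finset.range j, (Pset (S1 R 𝒮 h0 τ₁) β t).ncard) ^ τ *
        phi 𝒮 (sigma R 𝒮 h0 (β ⟨j, hj⟩)) ≤ (expNum 𝒮) ^ (τ + j) := by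
  intro j
  induction j with
  | zero =>
    intro hj
    simpa using phi_init_le hfin hK hval (hβ.1 hj)
  | succ j ih =>
    intro hj
    have hj' : j < τ₁ := Nat.lt_of_succ_lt hj
    calc (∏ t ∈ Finset.range (j+1), (Pset (S1 R 𝒮 h0 τ₁) β t).ncard) ^ τ *
          phi 𝒮 (sigma R 𝒮 h0 (β ⟨j+1, hj⟩))
        = (∏ t ∈ Finset.range j, (Pset (S1 R 𝒮 h0 τ₁) β t).ncard) ^ τ *
            ((Pset (S1 R 𝒮 h0 τ₁) β j).ncard ^ τ *
              phi 𝒮 (sigma R 𝒮 h0 (β ⟨j+1, hj⟩))) := by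
          rw [Finset.prod_range_succ, mul_pow]; ring
      _ ≤ (∏ t ∈ Finset.range j, (Pset (S1 R 𝒮 h0 τ₁) β t).ncard) ^ τ *
            (phi 𝒮 (sigma R 𝒮 h0 (β ⟨j, hj'⟩)) * expNum 𝒮) :=
          Nat.mul_le_mul_left _ (step_bound hfin hK hval hβ hj)
      _ = ((∏ t ∈ Finset.range j, (Pset (S1 R 𝒮 h0 τ₁) β t).ncard) ^ τ *
            phi 𝒮 (sigma R 𝒮 h0 (β ⟨j, hj'⟩))) * expNum 𝒮 := by ring
      _ ≤ (expNum 𝒮) ^ (τ + j) * expNum 𝒮 :=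
          Nat.mul_le_mul_right _ (ih hj')
      _ = (expNum 𝒮) ^ (τ + (j+1)) := by rw [← pow_succ]; congr 1

lemma cov1_finite (hK : K.Finite) (hval : ∀ β ∈ 𝒮, ∀ t, β t ∈ K) :
    (cov1 R 𝒮).Finite := by
  refine (hK.image (Lpull R)).subset ?_
  rintro C ⟨p, hp, hs, rfl⟩
  exact ⟨_, hval p.1 hp _, rfl⟩

lemma S1_vals_cov1 {τ₁ : ℕ} {β : Fin τ₁ → Set X₁} (hβ : β ∈ S1 R 𝒮 h0 τ₁)
    (t : Fin τ₁) : β t ∈ cov1 R 𝒮 := by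
  have := S1_hasCls hβ (t : ℕ) t.isLt
  exact this

lemma S1_prod_le (hfin : 𝒮.Finite) (hK : K.Finite)
    (hval : ∀ β ∈ 𝒮, ∀ t, β t ∈ K) (hSne : 𝒮.Nonempty) {τ₁ : ℕ} (h0₁ : 0 < τ₁)
    {β : Fin τ₁ → Set X₁} (hβ : β ∈ S1 R 𝒮 h0 τ₁) :
    (∏ t ∈ Finset.range τ₁, (Pset (S1 R 𝒮 h0 τ₁) β t).ncard) ^ τ ≤
      (expNum 𝒮) ^ (2*τ + τ₁ - 1) := by
  obtain ⟨m, rfl⟩ : ∃ m, τ₁ = m + 1 := ⟨τ₁ - 1, by omega⟩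
  have hmlt : m < m + 1 := Nat.lt_succ_self m
  have hlast : (Pset (S1 R 𝒮 h0 (m+1)) β m).ncard ≤ expNum 𝒮 := by
    have h1 : Pset (S1 R 𝒮 h0 (m+1)) β m ⊆ Lpull R '' inits 𝒮 :=
      Pset_S1_last (by omega)
    have hIfin : (inits 𝒮).Finite := hK.subset (inits_subset_K hval)
    calc (Pset (S1 R 𝒮 h0 (m+1)) β m).ncard
        ≤ (Lpull R '' inits 𝒮).ncard := Set.ncard_le_ncard h1 (hIfin.image _)
      _ ≤ (inits 𝒮).ncard := Set.ncard_image_le hIfin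
      _ ≤ expNum 𝒮 := inits_ncard_le_expNum (h0 := h0) hK hval hSne
  have hmain : (∏ t ∈ Finset.range m, (Pset (S1 R 𝒮 h0 (m+1)) β t).ncard) ^ τ ≤
      (expNum 𝒮) ^ (τ + m) := by
    have h2 := telescope hfin hK hval hβ m hmlt
    have h3 : 1 ≤ phi 𝒮 (sigma R 𝒮 h0 (β ⟨m, hmlt⟩)) :=
      one_le_phi hfin hK hval hSne (S1_hasCls hβ m hmlt)
    calc (∏ t ∈ Finset.range m, (Pset (S1 R 𝒮 h0 (m+1)) β t).ncard) ^ τ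
        ≤ (∏ t ∈ Finset.range m, (Pset (S1 R 𝒮 h0 (m+1)) β t).ncard) ^ τ *
            phi 𝒮 (sigma R 𝒮 h0 (β ⟨m, hmlt⟩)) := Nat.le_mul_of_pos_right _ h3
      _ ≤ _ := h2
  calc (∏ t ∈ Finset.range (m+1), (Pset (S1 R 𝒮 h0 (m+1)) β t).ncard) ^ τ
      = (∏ t ∈ Finset.range m, (Pset (S1 R 𝒮 h0 (m+1)) β t).ncard) ^ τ *
          ((Pset (S1 R 𝒮 h0 (m+1)) β m).ncard) ^ τ := by
        rw [Finset.prod_range_succ, mul_pow]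
    _ ≤ (expNum 𝒮) ^ (τ + m) * (expNum 𝒮) ^ τ :=
        Nat.mul_le_mul hmain (Nat.pow_le_pow_left hlast τ)
    _ = (expNum 𝒮) ^ (2*τ + (m+1) - 1) := by
        rw [← pow_add]; congr 1; omega

lemma expNum_S1_pow_le (hfin : 𝒮.Finite) (hK : K.Finite)
    (hval : ∀ β ∈ 𝒮, ∀ t, β t ∈ K) (hSne : 𝒮.Nonempty) {τ₁ : ℕ} (h0₁ : 0 < τ₁) :
    (expNum (S1 R 𝒮 h0 τ₁)) ^ τ ≤ (expNum 𝒮) ^ (2*τ + τ₁ - 1) := by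
  have hbdd : BddAbove {n | ∃ β ∈ S1 R 𝒮 h0 τ₁,
      n = ∏ t ∈ Finset.range τ₁, (Pset (S1 R 𝒮 h0 τ₁) β t).ncard} :=
    expNum_bddAbove (cov1_finite hK hval) (fun β hβ t => S1_vals_cov1 hβ t)
  have hne : {n | ∃ β ∈ S1 R 𝒮 h0 τ₁,
      n = ∏ t ∈ Finset.range τ₁, (Pset (S1 R 𝒮 h0 τ₁) β t).ncard}.Nonempty := by
    obtain ⟨β, hβ⟩ := S1_nonempty (h0 := h0) (R := R) hSne τ₁
    exact ⟨_, β, hβ, rfl⟩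
  obtain ⟨β, hβ, hv⟩ := Nat.sSup_mem hne hbdd
  rw [expNum, hv]
  exact S1_prod_le hfin hK hval hSne h0₁ hβ

end FRR
end Chunk6

section Chunk7
namespace FRR

variable {X₁ U₁ X₂ U₂ : Type*}

lemma Lpull_mono (R : Set (X₁ × X₂)) {A B : Set X₂} (h : A ⊆ B) :
    Lpull R A ⊆ Lpull R B := fun _ ⟨y, hy, hR⟩ => ⟨y, h hy, hR⟩

variable {F₁ : X₁ → U₁ → Set X₁} {F₂ : X₂ → U₂ → Set X₂}
variable {Q₁ : Set X₁} {Q₂ : Set X₂} {R : Set (X₁ × X₂)} {r : U₂ → U₁}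
variable {c₂ : InvCover F₂ Q₂} {τ : ℕ} {𝒮 : Set (Fin τ → Set X₂)} {h0 : 0 < τ}

lemma spanning_finite (hspan : IsSpanning F₂ Q₂ c₂ τ 𝒮) : 𝒮.Finite := by
  refine (Set.Finite.pi (fun _ : Fin τ => c₂.finite)).subset ?_
  intro α hα
  rw [Set.mem_univ_pi]
  exact fun i => hspan.1 α hα i

lemma elt_mem_cov (hspan : IsSpanning F₂ Q₂ c₂ τ 𝒮) {C : Set X₁}
    (hC : HasCls R 𝒮 C) : elt R 𝒮 h0 C ∈ c₂.cov :=
  hspan.1 _ (sigma_fst_mem (h0 := h0) hC) _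

/-- the pulled-back invariant cover on `Σ₁`. -/
noncomputable def mkCover (F₁ : X₁ → U₁ → Set X₁) (Q₁ : Set X₁)
    (c₂ : InvCover F₂ Q₂) (R : Set (X₁ × X₂)) (r : U₂ → U₁)
    (𝒮 : Set (Fin τ → Set X₂)) (h0 : 0 < τ)
    (hspan : IsSpanning F₂ Q₂ c₂ τ 𝒮)
    (hr : ∀ x₁ x₂, (x₁, x₂) ∈ R → ∀ u : U₂,
      {y₂ : X₂ | ∃ y₁ ∈ F₁ x₁ (r u), (y₁, y₂) ∈ R} ⊆ F₂ x₂ u)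
    (hRstrict : ∀ x₁ : X₁, ∃ x₂ : X₂, (x₁, x₂) ∈ R)
    (hQ : Q₁ = Lpull R Q₂) : InvCover F₁ Q₁ where
  cov := cov1 R 𝒮
  G := fun C => r (c₂.G (elt R 𝒮 h0 C))
  finite := cov1_finite c₂.finite hspan.1
  subset := by
    rintro A ⟨p, hp, hs, rfl⟩
    rw [hQ]
    exact Lpull_mono R (c₂.subset _ (hspan.1 p.1 hp _))
  covers := by
    intro x hx
    rw [hQ] at hx
    obtain ⟨x₂, hx₂, hR⟩ := hx
    obtain ⟨α, hα, h0', hx₂0⟩ := hspan.2.1 x₂ hx₂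
    exact ⟨Lpull R (α ⟨0, h0'⟩), ⟨(α, 0), hα, h0', rfl⟩, ⟨x₂, hx₂0, hR⟩⟩
  inv := by
    intro A hA x hx y₁ hy₁
    have hAeq : Lpull R (elt R 𝒮 h0 A) = A := Lpull_elt hA
    rw [← hAeq] at hx
    obtain ⟨x₂, hx₂, hR⟩ := hx
    obtain ⟨y₂, hy₂R⟩ := hRstrict y₁
    have hy₂F : y₂ ∈ F₂ x₂ (c₂.G (elt R 𝒮 h0 A)) :=
      hr x x₂ hR _ ⟨y₁, hy₁, hy₂R⟩
    have hy₂Q : y₂ ∈ Q₂ :=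
      c₂.inv _ (elt_mem_cov hspan hA) x₂ hx₂ hy₂F
    rw [hQ]
    exact ⟨y₂, hy₂Q, hy₂R⟩

lemma S1_isSpanning
    (hspan : IsSpanning F₂ Q₂ c₂ τ 𝒮)
    (hr : ∀ x₁ x₂, (x₁, x₂) ∈ R → ∀ u : U₂,
      {y₂ : X₂ | ∃ y₁ ∈ F₁ x₁ (r u), (y₁, y₂) ∈ R} ⊆ F₂ x₂ u)
    (hRstrict : ∀ x₁ : X₁, ∃ x₂ : X₂, (x₁, x₂) ∈ R)
    (hQ : Q₁ = Lpull R Q₂) {τ₁ : ℕ} (h0₁ : 0 < τ₁) :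
    IsSpanning F₁ Q₁ (mkCover F₁ Q₁ c₂ R r 𝒮 h0 hspan hr hRstrict hQ) τ₁
      (S1 R 𝒮 h0 τ₁) := by
  refine ⟨fun β hβ t => S1_vals_cov1 hβ t, ?_, ?_⟩
  · -- initial covering
    intro x hx
    rw [hQ] at hx
    obtain ⟨x₂, hx₂, hR⟩ := hx
    obtain ⟨α, hα, h0', hx₂0⟩ := hspan.2.1 x₂ hx₂
    set C₀ : Set X₁ := Lpull R (α ⟨0, h0'⟩) with hC₀
    have hC₀i : C₀ ∈ Lpull R '' inits 𝒮 := ⟨_, ⟨α, hα, h0', rfl⟩, rfl⟩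
    have hC₀cls : HasCls R 𝒮 C₀ := ⟨(α, 0), hα, h0', rfl⟩
    refine ⟨fun u => followF R 𝒮 h0 C₀ (u : ℕ), ⟨fun _ => hC₀i, fun t h => followF_mem hC₀cls t⟩,
      h0₁, ?_⟩
    exact ⟨x₂, hx₂0, hR⟩
  · -- the spanning condition
    intro β hβ t ht x hx y₁ hy₁
    have htv : (t : ℕ) < τ₁ := Nat.lt_of_succ_lt ht
    have hteta : β ⟨(t : ℕ), htv⟩ = β t := congrArg β (Fin.eta t htv)
    have hCcls : HasCls R 𝒮 (β t) := by rw [← hteta]; exact S1_hasCls hβ _ htv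
    have hx' : x ∈ Lpull R (elt R 𝒮 h0 (β t)) := by
      rw [Lpull_elt hCcls]; exact hx
    obtain ⟨x₂, hx₂, hR⟩ := hx'
    obtain ⟨y₂, hy₂R⟩ := hRstrict y₁
    have hy₂F : y₂ ∈ F₂ x₂ (c₂.G (elt R 𝒮 h0 (β t))) :=
      hr x x₂ hR _ ⟨y₁, hy₁, hy₂R⟩
    -- produce a set D ∈ NextF (β t) containing y₁
    have hD : ∃ D ∈ NextF R 𝒮 h0 (β t), y₁ ∈ D := by
      by_cases hreg : (sigma R 𝒮 h0 (β t)).2 + 1 < τ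
      · have hsp := hspan.2.2 (sigma R 𝒮 h0 (β t)).1
          (sigma_fst_mem (h0 := h0) hCcls)
          ⟨(sigma R 𝒮 h0 (β t)).2, sigma_lt R 𝒮 h0 (β t)⟩ hreg x₂ hx₂ hy₂F
        simp only [Set.mem_iUnion] at hsp
        obtain ⟨A, hA, hy₂A⟩ := hsp
        refine ⟨Lpull R A, ?_, ⟨y₂, hy₂A, hy₂R⟩⟩
        rw [NextF, if_pos hreg]
        exact ⟨A, hA, rfl⟩
      · have hy₂Q : y₂ ∈ Q₂ :=
          c₂.inv _ (elt_mem_cov hspan hCcls) x₂ hx₂ hy₂F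
        obtain ⟨α', hα', h0', hy₂0⟩ := hspan.2.1 y₂ hy₂Q
        refine ⟨Lpull R (α' ⟨0, h0'⟩), ?_, ⟨y₂, hy₂0, hy₂R⟩⟩
        rw [NextF, if_neg hreg]
        exact ⟨_, ⟨α', hα', h0', rfl⟩, rfl⟩
    obtain ⟨D, hDN, hy₁D⟩ := hD
    have hDP : D ∈ Pset (S1 R 𝒮 h0 τ₁) β (t : ℕ) := by
      refine NextF_subset_Pset_S1 hβ ht ?_
      rw [hteta]
      exact hDN
    simp only [Set.mem_iUnion]
    exact ⟨D, hDP, hy₁D⟩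

end FRR
end Chunk7

section Chunk8
namespace FRR

lemma ereal_le_coe_of_forall {x : EReal} {c : ℝ}
    (h : ∀ δ : ℝ, 0 < δ → x ≤ ((c + δ : ℝ) : EReal)) : x ≤ (c : EReal) := by
  induction x using EReal.rec with
  | bot => exact bot_le
  | coe a =>
    refine EReal.coe_le_coe_iff.mpr ?_
    by_contra hca
    push_neg at hca
    have h2 := EReal.coe_le_coe_iff.mp (h ((a - c)/2) (by linarith))
    linarith
  | top =>
    have h1 := h 1 one_pos
    exact absurd h1 (EReal.coe_lt_top (c + 1)).not_ge

lemma elog2_natCast (n : ℕ) : elog2 (n : ℕ∞) = ((Real.logb 2 n : ℝ) : EReal) := rfl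

lemma elog2_top : elog2 (⊤ : ℕ∞) = ⊤ := rfl

lemma elog2_le_of_le {m : ℕ∞} {k : ℕ} (hk : 1 ≤ k) (h : m ≤ (k : ℕ∞)) :
    elog2 m ≤ ((Real.logb 2 k : ℝ) : EReal) := by
  have hm : m ≠ ⊤ := ne_top_of_le_ne_top (WithTop.natCast_ne_top k) h
  obtain ⟨n, hn⟩ := WithTop.ne_top_iff_exists.mp hm
  have hn' : m = (n : ℕ∞) := by exact_mod_cast hn.symm
  subst hn'
  have hnk : n ≤ k := by exact_mod_cast h
  rw [elog2_natCast]
  refine EReal.coe_le_coe_iff.mpr ?_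
  rcases Nat.eq_zero_or_pos n with rfl | hn0
  · simpa using Real.logb_nonneg one_lt_two (by exact_mod_cast hk)
  · exact Real.logb_le_logb_of_le one_lt_two (by exact_mod_cast hn0) (by exact_mod_cast hnk)

end FRR
end Chunk8

end FRRConstruction

/-- If `R` is a feedback refinement relation from `Σ₁` to `Σ₂` and
`Q₁ = R⁻¹(Q₂)`, then `h_{1,inv} ≤ h_{2,inv}`. -/
theorem invEntropy_le_of_feedback_refinement
    {X₁ U₁ X₂ U₂ : Type*} [Nonempty X₁] [Nonempty U₁] [Nonempty X₂] [Nonempty U₂]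
    (F₁ : X₁ → U₁ → Set X₁) (hF₁ : ∀ x u, (F₁ x u).Nonempty)
    (F₂ : X₂ → U₂ → Set X₂) (hF₂ : ∀ x u, (F₂ x u).Nonempty)
    (Q₁ : Set X₁) (hQ₁ : Q₁.Nonempty) (Q₂ : Set X₂) (hQ₂ : Q₂.Nonempty)
    (R : Set (X₁ × X₂))
    (hRstrict : ∀ x₁ : X₁, ∃ x₂ : X₂, (x₁, x₂) ∈ R)
    (hfrr : ∃ r : U₂ → U₁, ∀ x₁ x₂, (x₁, x₂) ∈ R → ∀ u : U₂,
      {y₂ : X₂ | ∃ y₁ ∈ F₁ x₁ (r u), (y₁, y₂) ∈ R} ⊆ F₂ x₂ u)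
    (hQ : Q₁ = {x₁ : X₁ | ∃ x₂ ∈ Q₂, (x₁, x₂) ∈ R}) :
    invEntropy F₁ Q₁ ≤ invEntropy F₂ Q₂ := by
  classical
  obtain ⟨r, hr⟩ := hfrr
  have hQ' : Q₁ = FRR.Lpull R Q₂ := hQ
  refine le_iInf (fun c₂ => le_iInf (fun τ₂ => le_iInf (fun hτ₂ => ?_)))
  have hτ₂R : (0 : ℝ) < (τ₂ : ℝ) := by exact_mod_cast hτ₂
  have hpos : (0 : EReal) < (((τ₂ : ℝ)⁻¹ : ℝ) : EReal) := by
    exact_mod_cast inv_pos.mpr hτ₂R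
  set S₂ := {n : ℕ∞ | ∃ 𝒮 : Set (Fin τ₂ → Set X₂),
    IsSpanning F₂ Q₂ c₂ τ₂ 𝒮 ∧ n = (expNum 𝒮 : ℕ∞)} with hS₂def
  have hrinv : rinv F₂ Q₂ c₂ τ₂ = sInf S₂ := rfl
  rcases Set.eq_empty_or_nonempty S₂ with hemp | hne
  · rw [hrinv, hemp, sInf_empty, FRR.elog2_top, EReal.mul_top_of_pos hpos]
    exact le_top
  · -- extract a minimizing spanning set
    have hne_top : sInf S₂ ≠ ⊤ := by
      obtain ⟨x, 𝒮₀, hsp₀, rfl⟩ := hne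
      exact ne_top_of_le_ne_top (WithTop.natCast_ne_top _) (sInf_le ⟨𝒮₀, hsp₀, rfl⟩)
    obtain ⟨m, hm⟩ := WithTop.ne_top_iff_exists.mp hne_top
    have hmem : sInf S₂ ∈ S₂ := by
      have hlt : sInf S₂ < ((m : ℕ∞) + 1) := by
        rw [← hm]
        exact (ENat.lt_add_one_iff (WithTop.natCast_ne_top m)).mpr (le_refl _)
      obtain ⟨y, hy, hylt⟩ := sInf_lt_iff.mp hlt
      have h1 : sInf S₂ ≤ y := sInf_le hy
      have h2 : y ≤ sInf S₂ := by
        rw [← hm]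
        exact (ENat.lt_add_one_iff (WithTop.natCast_ne_top m)).mp hylt
      exact (le_antisymm h2 h1) ▸ hy
    obtain ⟨𝒮, hspan, hNdef⟩ := hmem
    set N := expNum 𝒮 with hNd
    -- basic facts about 𝒮
    obtain ⟨x₂0, hx₂0⟩ := hQ₂
    obtain ⟨α0, hα0, h0', _⟩ := hspan.2.1 x₂0 hx₂0
    have hSne : 𝒮.Nonempty := ⟨α0, hα0⟩
    have hSfin : 𝒮.Finite := FRR.spanning_finite hspan
    have hKfin := c₂.finite
    have hval := hspan.1
    have hN1 : 1 ≤ N := FRR.one_le_expNum hKfin hval hα0 hτ₂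
    set L := Real.logb 2 N with hLd
    have hL0 : 0 ≤ L := Real.logb_nonneg one_lt_two (by exact_mod_cast hN1)
    -- the pulled-back cover
    set c₁ := FRR.mkCover F₁ Q₁ c₂ R r 𝒮 hτ₂ hspan hr hRstrict hQ' with hc₁
    refine le_trans (iInf_le _ c₁) ?_
    rw [hrinv, hNdef, FRR.elog2_natCast, ← EReal.coe_mul]
    refine FRR.ereal_le_coe_of_forall (fun δ hδ => ?_)
    -- choose a large horizon τ₁
    obtain ⟨τ₁, hτ₁⟩ := exists_nat_gt (2 * L / δ + 1)
    have hτ₁R : (0 : ℝ) < (τ₁ : ℝ) := by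
      have : (0:ℝ) < 2 * L / δ + 1 := by positivity
      linarith
    have h0₁ : 0 < τ₁ := by exact_mod_cast hτ₁R
    -- the spanning set for Σ₁ and its expansion number
    set E₁ := expNum (FRR.S1 R 𝒮 hτ₂ τ₁) with hE₁d
    have hrle : rinv F₁ Q₁ c₁ τ₁ ≤ (E₁ : ℕ∞) :=
      sInf_le ⟨_, FRR.S1_isSpanning hspan hr hRstrict hQ' h0₁, rfl⟩
    obtain ⟨β0, hβ0⟩ := FRR.S1_nonempty (R := R) (h0 := hτ₂) hSne τ₁
    have hE₁1 : 1 ≤ E₁ :=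
      FRR.one_le_expNum (FRR.cov1_finite hKfin hval)
        (fun β hβ t => FRR.S1_vals_cov1 hβ t) hβ0 h0₁
    have hpow : E₁ ^ τ₂ ≤ N ^ (2*τ₂ + τ₁ - 1) :=
      FRR.expNum_S1_pow_le hSfin hKfin hval hSne h0₁
    -- the real logarithmic bound
    have hcast : ((2*τ₂ + τ₁ - 1 : ℕ) : ℝ) = 2*(τ₂:ℝ) + (τ₁:ℝ) - 1 := by
      have h1 : 1 ≤ 2*τ₂ + τ₁ := by omega
      push_cast [Nat.cast_sub h1]
      ring
    have hlogE : Real.logb 2 (E₁ : ℝ) ≤ (2*(τ₂:ℝ) + (τ₁:ℝ) - 1)/(τ₂:ℝ) * L := by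
      have h1 : (τ₂:ℝ) * Real.logb 2 (E₁:ℝ) ≤ (2*(τ₂:ℝ) + (τ₁:ℝ) - 1) * L := by
        calc (τ₂:ℝ) * Real.logb 2 (E₁:ℝ) = Real.logb 2 ((E₁:ℝ) ^ τ₂) := by
              rw [Real.logb_pow]
          _ ≤ Real.logb 2 ((N:ℝ) ^ (2*τ₂ + τ₁ - 1)) := by
              refine Real.logb_le_logb_of_le one_lt_two ?_ ?_
              · have : (1:ℝ) ≤ (E₁:ℝ) := by exact_mod_cast hE₁1
                positivity
              · have := hpow
                exact_mod_cast this
          _ = (2*(τ₂:ℝ) + (τ₁:ℝ) - 1) * L := by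
              rw [Real.logb_pow, hcast]
      rw [div_mul_eq_mul_div, le_div_iff₀ hτ₂R]
      linarith
    -- put everything together in EReal
    have hterm : coverEntropy F₁ Q₁ c₁ ≤
        (((τ₁ : ℝ)⁻¹ : ℝ) : EReal) * elog2 (rinv F₁ Q₁ c₁ τ₁) :=
      iInf_le_of_le τ₁ (iInf_le _ h0₁)
    obtain ⟨n, hn⟩ := WithTop.ne_top_iff_exists.mp
      (ne_top_of_le_ne_top (WithTop.natCast_ne_top _) hrle)
    have hn' : rinv F₁ Q₁ c₁ τ₁ = (n : ℕ∞) := by exact_mod_cast hn.symm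
    have hnE : n ≤ E₁ := by
      rw [hn'] at hrle
      exact_mod_cast hrle
    have hlogn : Real.logb 2 (n:ℝ) ≤ Real.logb 2 (E₁:ℝ) := by
      rcases Nat.eq_zero_or_pos n with rfl | hn0
      · simpa using Real.logb_nonneg one_lt_two (by exact_mod_cast hE₁1)
      · exact Real.logb_le_logb_of_le one_lt_two (by exact_mod_cast hn0)
          (by exact_mod_cast hnE)
    refine hterm.trans ?_
    rw [hn', FRR.elog2_natCast, ← EReal.coe_mul]
    refine EReal.coe_le_coe_iff.mpr ?_
    -- final real arithmetic
    have hchain : (τ₁:ℝ)⁻¹ * Real.logb 2 (n:ℝ) ≤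
        (τ₁:ℝ)⁻¹ * ((2*(τ₂:ℝ) + (τ₁:ℝ) - 1)/(τ₂:ℝ) * L) := by
      refine mul_le_mul_of_nonneg_left (hlogn.trans hlogE) (by positivity)
    refine hchain.trans ?_
    -- (2τ₂+τ₁-1)/(τ₁ τ₂) ≤ 1/τ₂ + 2/τ₁  and  2L/τ₁ ≤ δ
    have hdelta : 2 * L ≤ δ * (τ₁:ℝ) := by
      have h2 : δ * (2 * L / δ + 1) ≤ δ * (τ₁:ℝ) := le_of_lt (by
        exact mul_lt_mul_of_pos_left hτ₁ hδ)
      have h3 : δ * (2 * L / δ) = 2 * L := by field_simp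
      nlinarith
    have hkey : (τ₁:ℝ)⁻¹ * ((2*(τ₂:ℝ) + (τ₁:ℝ) - 1)/(τ₂:ℝ) * L) ≤
        (τ₂:ℝ)⁻¹ * L + 2 * L / (τ₁:ℝ) := by
      rw [div_mul_eq_mul_div, inv_mul_eq_div, div_div, div_le_iff₀ (by positivity)]
      have e1 : ((τ₂:ℝ)⁻¹ * L + 2*L/(τ₁:ℝ)) * ((τ₂:ℝ)*(τ₁:ℝ)) = L*(τ₁:ℝ) + 2*L*(τ₂:ℝ) := by
        field_simp
      rw [e1]
      nlinarith [hL0]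
    refine hkey.trans ?_
    have h2Lτ : 2 * L / (τ₁:ℝ) ≤ δ := by
      rw [div_le_iff₀ hτ₁R]
      nlinarith
    linarith
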